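/- Let C ⊆ F_{q^m}^n be a linear rank-metric code of dimension k over F_{q^m} (1 ≤ k ≤ n) with generator matrix G ∈ F_{q^m}^{k×n}. Then C is an MRD code if and only if for every n×n upper triangular matrix A with entries in F_q and all diagonal entries equal to 1, every maximal minor of the matrix G·A (the product computed over F_{q^m}, viewing the entries of A inside F_{q^m}) is non-zero. -/

import Mathlib

open Matrix

/-- The rank over the subfield `Fq` of a vector with entries in `K`:
the `Fq`-dimension of the `Fq`-span of its coordinates. -/
noncomputable def rankQ (Fq : Type) {K : Type} [Field Fq] [Field K] [Algebra Fq K] {n : ℕ}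
    (v : Fin n → K) : ℕ :=
  Module.finrank Fq (Submodule.span Fq (Set.range v))

/-- The minimum rank distance of a linear rank-metric code `C ⊆ K^n`. -/
noncomputable def minRankDist (Fq : Type) {K : Type} [Field Fq] [Field K] [Algebra Fq K] {n : ℕ}
    (C : Submodule K (Fin n → K)) : ℕ :=
  sInf (rankQ Fq '' {c : Fin n → K | c ∈ C ∧ c ≠ 0})

/-- A linear code `C ⊆ K^n` of dimension `k` over `K` is MRD if its minimum
rank distance equals `n - k + 1`. -/
def IsMRD (Fq : Type) {K : Type} [Field Fq] [Field K] [Algebra Fq K] {n : ℕ}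
    (C : Submodule K (Fin n → K)) (k : ℕ) : Prop :=
  Module.finrank K C = k ∧ minRankDist Fq C = n - k + 1

/-- `G` is a generator matrix of `C`: its rows form a `K`-basis of `C`. -/
def IsGenMat {K : Type} [Field K] {k n : ℕ} (C : Submodule K (Fin n → K))
    (G : Matrix (Fin k) (Fin n) K) : Prop :=
  LinearIndependent K (fun i => G i) ∧ Submodule.span K (Set.range fun i => G i) = C

/-- `C` is MRD iff for every upper triangular `n × n` matrix `A` over `F_q`
with all-one diagonal, every maximal minor of `G * A` is non-zero. -/

lemma echelon {Fq : Type} [Field Fq] {n : ℕ} : ∀ (k : ℕ) (W : Submodule Fq (Fin n → Fq)),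
    k ≤ Module.finrank Fq W →
    ∃ (φ : Fin k → Fin n) (b : Fin k → (Fin n → Fq)), Function.Injective φ ∧
      ∀ j, b j ∈ W ∧ b j (φ j) = 1 ∧ ∀ i, φ j < i → b j i = 0 := by
  intro k
  induction k with
  | zero =>
    intro W _
    exact ⟨Fin.elim0, Fin.elim0, fun a => a.elim0, fun j => j.elim0⟩
  | succ k ih =>
    intro W hW
    have hWne : W ≠ ⊥ := by
      intro h
      rw [h, finrank_bot] at hW
      omega
    obtain ⟨w, hwW, hw0⟩ := Submodule.ne_bot_iff W |>.mp hWne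
    have hex : ∃ i, w i ≠ 0 := by
      by_contra hc
      push_neg at hc
      exact hw0 (funext hc)
    classical
    set s := Finset.univ.filter (fun i => w i ≠ 0) with hs
    have hsne : s.Nonempty := by
      obtain ⟨i, hi⟩ := hex
      exact ⟨i, by simp [hs, hi]⟩
    set p := s.max' hsne with hp
    have hwp : w p ≠ 0 := by
      have := s.max'_mem hsne
      simp [hs] at this
      exact this
    have hvan : ∀ i, p < i → w i = 0 := by
      intro i hi
      by_contra hwi
      have : i ∈ s := by simp [hs, hwi]
      exact absurd (s.le_max' i this) (not_le.mpr hi)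
    set b0 : Fin n → Fq := (w p)⁻¹ • w with hb0
    have hb0W : b0 ∈ W := W.smul_mem _ hwW
    have hb0p : b0 p = 1 := by
      simp [hb0, inv_mul_cancel₀ hwp]
    have hb0van : ∀ i, p < i → b0 i = 0 := by
      intro i hi
      simp [hb0, hvan i hi]
    -- the subcode with p-th coordinate zero
    set f : W →ₗ[Fq] Fq := (LinearMap.proj p).comp W.subtype with hf
    have hker : k ≤ Module.finrank Fq ((LinearMap.ker f).map W.subtype) := by
      rw [Submodule.finrank_map_subtype_eq]
      have h1 := LinearMap.finrank_range_add_finrank_ker f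
      have h2 : Module.finrank Fq (LinearMap.range f) ≤ 1 := by
        have := (LinearMap.range f).finrank_le
        simpa using this
      omega
    obtain ⟨φ', b', hφ', hb'⟩ := ih _ hker
    have hb'W : ∀ j, b' j ∈ W ∧ b' j p = 0 := by
      intro j
      obtain ⟨y, hy, hyeq⟩ := Submodule.mem_map.mp (hb' j).1
      refine ⟨hyeq ▸ y.2, ?_⟩
      rw [← hyeq]
      simpa [hf] using hy
    have hpnot : ∀ j, φ' j ≠ p := by
      intro j hj
      have h1 := (hb' j).2.1
      rw [hj, (hb'W j).2] at h1
      exact zero_ne_one h1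
    refine ⟨Fin.cons p φ', Fin.cons b0 b', ?_, ?_⟩
    · intro a a' h
      induction a using Fin.cases with
      | zero =>
        induction a' using Fin.cases with
        | zero => rfl
        | succ ja' =>
          simp only [Fin.cons_zero, Fin.cons_succ] at h
          exact absurd h.symm (hpnot ja')
      | succ ja =>
        induction a' using Fin.cases with
        | zero =>
          simp only [Fin.cons_zero, Fin.cons_succ] at h
          exact absurd h (hpnot ja)
        | succ ja' =>
          simp only [Fin.cons_succ] at h
          exact congrArg Fin.succ (hφ' h)
    · intro j
      induction j using Fin.cases with
      | zero =>
        simpa only [Fin.cons_zero] using ⟨hb0W, hb0p, hb0van⟩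
      | succ j' =>
        simpa only [Fin.cons_succ] using ⟨(hb'W j').1, (hb' j').2.1, (hb' j').2.2⟩

theorem stmt3 {q m n k : ℕ} (Fq K : Type) [Field Fq] [Fintype Fq] [Field K] [Fintype K]
    [Algebra Fq K] (hq : Fintype.card Fq = q) (hK : Fintype.card K = q ^ m)
    (hk : 1 ≤ k) (hkn : k ≤ n)
    (C : Submodule K (Fin n → K)) (G : Matrix (Fin k) (Fin n) K) (hG : IsGenMat C G) :
    IsMRD Fq C k ↔
      ∀ A : Matrix (Fin n) (Fin n) Fq, (∀ i, A i i = 1) → (∀ i j : Fin n, j < i → A i j = 0) →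
        ∀ φ : Fin k → Fin n, Function.Injective φ →
          ((G * A.map (algebraMap Fq K)).submatrix id φ).det ≠ 0 := by
  classical
  obtain ⟨hGli, hGspan⟩ := hG
  have hFD : FiniteDimensional Fq K := Module.finite_iff_finite.mpr inferInstance
  have hdim : Module.finrank K C = k := by
    rw [← hGspan, finrank_span_eq_card hGli, Fintype.card_fin]
  -- the vecMul form of codewords
  have hvec : ∀ x : Fin k → K, (∑ l, x l • G l) = x ᵥ* G := by
    intro x
    funext i
    simp [Matrix.vecMul, dotProduct, Finset.sum_apply]
  have hne : ∀ x : Fin k → K, x ≠ 0 → x ᵥ* G ≠ 0 := by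
    intro x hx h0
    refine hx (funext fun l => ?_)
    exact Fintype.linearIndependent_iff.mp hGli x (by rw [hvec x, h0]) l
  have hmem : ∀ x : Fin k → K, x ᵥ* G ∈ C := by
    intro x
    rw [← hGspan]
    exact Submodule.mem_span_range_iff_exists_fun K |>.mpr ⟨x, hvec x⟩
  -- the key computation
  have hcomp : ∀ (A : Matrix (Fin n) (Fin n) Fq) (φ : Fin k → Fin n) (x : Fin k → K) (j : Fin k),
      (x ᵥ* ((G * A.map (algebraMap Fq K)).submatrix id φ)) j
        = Fintype.linearCombination Fq (x ᵥ* G) (fun i => A i (φ j)) := by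
    intro A φ x j
    simp only [Matrix.vecMul, dotProduct, Matrix.submatrix_apply, id_eq, Matrix.mul_apply,
      Matrix.map_apply, Fintype.linearCombination_apply, Algebra.smul_def, Finset.mul_sum,
      Finset.sum_mul]
    rw [Finset.sum_comm]
    refine Finset.sum_congr rfl fun i _ => Finset.sum_congr rfl fun l _ => by ring
  -- rankQ via the linear combination map
  have hrk : ∀ c : Fin n → K, rankQ Fq c
      = Module.finrank Fq (LinearMap.range (Fintype.linearCombination Fq c)) := by
    intro c
    rw [Fintype.range_linearCombination]
    rfl
  have hrn : ∀ c : Fin n → K,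
      Module.finrank Fq (LinearMap.range (Fintype.linearCombination Fq c))
        + Module.finrank Fq (LinearMap.ker (Fintype.linearCombination Fq c)) = n := by
    intro c
    rw [LinearMap.finrank_range_add_finrank_ker, Module.finrank_fin_fun]
  -- the central equivalence
  have key : (∀ c, c ∈ C → c ≠ 0 → n - k + 1 ≤ rankQ Fq c) ↔
      (∀ A : Matrix (Fin n) (Fin n) Fq, (∀ i, A i i = 1) →
        (∀ i j : Fin n, j < i → A i j = 0) →
        ∀ φ : Fin k → Fin n, Function.Injective φ →
          ((G * A.map (algebraMap Fq K)).submatrix id φ).det ≠ 0) := by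
    constructor
    · intro h A hdiag htri φ hφ hdet0
      obtain ⟨x, hx0, hxM⟩ := Matrix.exists_vecMul_eq_zero_iff.mpr hdet0
      set c : Fin n → K := x ᵥ* G with hc
      set b : Fin k → (Fin n → Fq) := fun j i => A i (φ j) with hb
      have hbker : ∀ j, b j ∈ LinearMap.ker (Fintype.linearCombination Fq c) := by
        intro j
        rw [LinearMap.mem_ker]
        rw [show (Fintype.linearCombination Fq c) (b j)
          = (x ᵥ* ((G * A.map (algebraMap Fq K)).submatrix id φ)) j from (hcomp A φ x j).symm]
        rw [hxM]
        rfl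
      have hbli : LinearIndependent Fq b := by
        rw [Fintype.linearIndependent_iff]
        intro g hg
        by_contra hgs
        push_neg at hgs
        obtain ⟨j1, hj1⟩ := hgs
        set s := Finset.univ.filter (fun j => g j ≠ 0) with hs
        have hsne : s.Nonempty := ⟨j1, by simp [hs, hj1]⟩
        obtain ⟨j0, hj0s, hj0max⟩ := Finset.exists_max_image s φ hsne
        have hgj0 : g j0 ≠ 0 := by simpa [hs] using hj0s
        have := congrFun hg (φ j0)
        rw [Finset.sum_apply] at this
        rw [Finset.sum_eq_single j0 ?_ ?_] at this
        · simp only [Pi.smul_apply, hb, hdiag (φ j0), smul_eq_mul, mul_one] at this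
          exact hgj0 this
        · intro j _ hjne
          by_cases hgj : g j = 0
          · simp [hgj]
          · have hjs : j ∈ s := by simp [hs, hgj]
            have hle : φ j ≤ φ j0 := hj0max j hjs
            have hlt : φ j < φ j0 := lt_of_le_of_ne hle (fun hh => hjne (hφ hh))
            simp [hb, htri (φ j0) (φ j) hlt]
        · intro hj0
          exact absurd (Finset.mem_univ j0) hj0
      have hkle : k ≤ Module.finrank Fq
          (LinearMap.ker (Fintype.linearCombination Fq c)) := by
        have hsp : Submodule.span Fq (Set.range b)
            ≤ LinearMap.ker (Fintype.linearCombination Fq c) := by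
          rw [Submodule.span_le]
          rintro y ⟨j, rfl⟩
          exact hbker j
        have := Submodule.finrank_mono hsp
        rwa [finrank_span_eq_card hbli, Fintype.card_fin] at this
      have hcne : c ≠ 0 := hne x hx0
      have hrank := h c (hmem x) hcne
      rw [hrk c] at hrank
      have := hrn c
      omega
    · intro h c hcC hc0
      by_contra hlt
      push_neg at hlt
      have hkk : k ≤ Module.finrank Fq
          (LinearMap.ker (Fintype.linearCombination Fq c)) := by
        have h1 := hrn c
        rw [← hrk c] at h1
        have h2 : rankQ Fq c ≤ n - k := by omega
        omega
      obtain ⟨φ, b, hφ, hb⟩ := echelon k _ hkk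
      set A : Matrix (Fin n) (Fin n) Fq := fun i i' =>
        if h : ∃ j, φ j = i' then b h.choose i else (if i = i' then 1 else 0) with hA
      have hcol : ∀ j i, A i (φ j) = b j i := by
        intro j i
        have hex : ∃ j', φ j' = φ j := ⟨j, rfl⟩
        rw [hA]
        simp only [dif_pos hex]
        rw [hφ hex.choose_spec]
      have hdiag : ∀ i, A i i = 1 := by
        intro i
        by_cases hex : ∃ j, φ j = i
        · rw [hA]
          simp only [dif_pos hex]
          rw [show b hex.choose i = b hex.choose (φ hex.choose) from by rw [hex.choose_spec]]
          exact (hb hex.choose).2.1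
        · rw [hA]
          simp [dif_neg hex]
      have htri : ∀ i i' : Fin n, i' < i → A i i' = 0 := by
        intro i i' hlt'
        by_cases hex : ∃ j, φ j = i'
        · rw [hA]
          simp only [dif_pos hex]
          refine (hb hex.choose).2.2 i ?_
          rw [hex.choose_spec]
          exact hlt'
        · rw [hA]
          simp [dif_neg hex, Fin.ne_of_gt hlt']
      obtain ⟨x, hxc⟩ := Submodule.mem_span_range_iff_exists_fun K |>.mp (hGspan ▸ hcC)
      have hcx : c = x ᵥ* G := by rw [← hxc, hvec]
      have hx0 : x ≠ 0 := by
        intro h0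
        apply hc0
        rw [hcx, h0]
        funext i
        simp [Matrix.vecMul, dotProduct]
      have hdet : ((G * A.map (algebraMap Fq K)).submatrix id φ).det = 0 := by
        rw [← Matrix.exists_vecMul_eq_zero_iff]
        refine ⟨x, hx0, funext fun j => ?_⟩
        rw [hcomp A φ x j, ← hcx]
        have hbj : (fun i => A i (φ j)) = b j := funext fun i => hcol j i
        rw [hbj]
        exact LinearMap.mem_ker.mp ((hb j).1)
      exact h A hdiag htri φ hφ hdet
  -- Singleton-type bound: a nonzero codeword of rank ≤ n - k + 1
  have hsing : ∃ c, c ∈ C ∧ c ≠ 0 ∧ rankQ Fq c ≤ n - k + 1 := by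
    set G' : Matrix (Fin k) (Fin (k-1)) K :=
      G.submatrix id (fun j : Fin (k-1) => (⟨j.val, by omega⟩ : Fin n)) with hG'
    have hker : LinearMap.ker (Matrix.vecMulLinear G') ≠ ⊥ := by
      intro hbot
      have hinj := LinearMap.ker_eq_bot.mp hbot
      have := LinearMap.finrank_le_finrank_of_injective hinj
      rw [Module.finrank_fin_fun, Module.finrank_fin_fun] at this
      omega
    obtain ⟨x, hx, hx0⟩ := (Submodule.ne_bot_iff _).mp hker
    rw [LinearMap.mem_ker, Matrix.vecMulLinear_apply] at hx
    set c : Fin n → K := x ᵥ* G with hc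
    have hcz : ∀ i : Fin n, i.val < k - 1 → c i = 0 := by
      intro i hi
      have := congrFun hx ⟨i.val, hi⟩
      simp only [Matrix.vecMul, dotProduct, hG', Matrix.submatrix_apply, id_eq] at this ⊢
      rw [show (⟨(⟨i.val, hi⟩ : Fin (k-1)).val, by omega⟩ : Fin n) = i from Fin.ext rfl] at this
      simpa [hc, Matrix.vecMul, dotProduct] using this
    refine ⟨c, hmem x, hne x hx0, ?_⟩
    set t : Finset K :=
      Finset.image (fun j : Fin (n-k+1) => c ⟨k-1+j.val, by omega⟩) Finset.univ with ht
    have hsub : Submodule.span Fq (Set.range c) ≤ Submodule.span Fq (t : Set K) := by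
      rw [Submodule.span_le]
      rintro y ⟨i, rfl⟩
      by_cases hik : i.val < k - 1
      · rw [hcz i hik]
        exact Submodule.zero_mem _
      · apply Submodule.subset_span
        refine Finset.mem_coe.mpr (Finset.mem_image.mpr ⟨⟨i.val - (k-1), by omega⟩,
          Finset.mem_univ _, ?_⟩)
        congr 1
        exact Fin.ext (by simp; omega)
      
    calc rankQ Fq c ≤ Module.finrank Fq (Submodule.span Fq (t : Set K)) :=
          Submodule.finrank_mono hsub
      _ ≤ t.card := finrank_span_finset_le_card t
      _ ≤ n - k + 1 := le_trans (Finset.card_image_le) (by simp)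
  -- assemble
  rw [show IsMRD Fq C k ↔ minRankDist Fq C = n - k + 1 from by
    unfold IsMRD; tauto]
  rw [← key]
  unfold minRankDist
  constructor
  · intro hinf c hcC hc0
    rw [← hinf]
    exact Nat.sInf_le ⟨c, ⟨hcC, hc0⟩, rfl⟩
  · intro hlow
    obtain ⟨c0, hc0C, hc0ne, hc0le⟩ := hsing
    have hmem0 : rankQ Fq c0 ∈ rankQ Fq '' {c : Fin n → K | c ∈ C ∧ c ≠ 0} :=
      ⟨c0, ⟨hc0C, hc0ne⟩, rfl⟩
    have h1 : sInf (rankQ Fq '' {c : Fin n → K | c ∈ C ∧ c ≠ 0}) ≤ n - k + 1 :=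
      le_trans (Nat.sInf_le hmem0) hc0le
    have h2 : n - k + 1 ≤ sInf (rankQ Fq '' {c : Fin n → K | c ∈ C ∧ c ≠ 0}) := by
      obtain ⟨c', ⟨hc'C, hc'ne⟩, hc'eq⟩ := Nat.sInf_mem ⟨_, hmem0⟩
      rw [← hc'eq]
      exact hlow c' hc'C hc'ne
    omega
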